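/- For any integer n ≥ 1 and any real number ξ not algebraic of degree ≤ 1 (i.e., irrational), λₙ(ξ) ≥ (w₁(ξ) − n + 1)/n, where w₁(ξ) is the supremum of w such that 0 < |qξ − p| ≤ max(|p|,|q|)^{−w} has infinitely many integer solutions (p, q), and λₙ(ξ) is the supremum of λ such that 0 < |x₀| ≤ X and max_{1≤m≤n} |x₀ξᵐ − xₘ| ≤ X^{−λ} has an integer solution for arbitrarily large X. -/

import Mathlib

open scoped ENNReal

/-- `w₁(ξ)`: supremum of `w` such that `0 < |qξ - p| ≤ max(|p|,|q|)^(-w)` has infinitely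
many integer solutions `(p, q)`. -/
noncomputable def wOneExp (ξ : ℝ) : ℝ≥0∞ :=
  sSup {w : ℝ≥0∞ | ∃ r : ℝ, w = ENNReal.ofReal r ∧
    {pq : ℤ × ℤ | 0 < |(pq.2 : ℝ) * ξ - pq.1| ∧
      |(pq.2 : ℝ) * ξ - pq.1| ≤ (max (|pq.1| : ℝ) (|pq.2| : ℝ)) ^ (-r)}.Infinite}

/-- The system `0 < |x₀| ≤ X`, `max_{1 ≤ m ≤ n} |x₀ξᵐ - xₘ| ≤ X^(-l)` is solvable. -/
def LamSol (n : ℕ) (ξ X l : ℝ) : Prop :=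
  ∃ x : Fin (n + 1) → ℤ, x 0 ≠ 0 ∧ (|x 0| : ℝ) ≤ X ∧
    ∀ m : Fin (n + 1), 1 ≤ (m : ℕ) → |(x 0 : ℝ) * ξ ^ (m : ℕ) - x m| ≤ X ^ (-l)

/-- `λₙ(ξ)`: supremum of `λ` such that the above system is solvable for arbitrarily
large `X`. -/
noncomputable def lamExp (n : ℕ) (ξ : ℝ) : ℝ≥0∞ :=
  sSup {w : ℝ≥0∞ | ∃ r : ℝ, w = ENNReal.ofReal r ∧
    ∀ X₀ : ℝ, ∃ X : ℝ, X₀ ≤ X ∧ LamSol n ξ X r}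

private lemma dirichlet_sim (n : ℕ) (hn : 1 ≤ n) (ξ : ℝ) (X₀ : ℝ) :
    ∃ X : ℝ, X₀ ≤ X ∧ LamSol n ξ X ((n : ℝ)⁻¹) := by
  obtain ⟨Q₀, hQ₀⟩ := exists_nat_ge X₀
  set Q : ℕ := max Q₀ 1 with hQdef
  have hQ1 : 1 ≤ Q := le_max_right _ _
  have hQ0 : (0:ℝ) < Q := by exact_mod_cast hQ1
  have hQX : X₀ ≤ (Q:ℝ) := hQ₀.trans (by exact_mod_cast le_max_left _ _)
  have hbox : ∀ (q : ℕ) (m : Fin n),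
      0 ≤ ⌊Int.fract ((q:ℝ) * ξ ^ ((m:ℕ)+1)) * Q⌋ ∧
      ⌊Int.fract ((q:ℝ) * ξ ^ ((m:ℕ)+1)) * Q⌋ < (Q:ℤ) := by
    intro q m
    constructor
    · exact Int.floor_nonneg.mpr (mul_nonneg (Int.fract_nonneg _) hQ0.le)
    · apply Int.floor_lt.mpr
      push_cast
      nlinarith [Int.fract_lt_one ((q:ℝ) * ξ ^ ((m:ℕ)+1)),
        Int.fract_nonneg ((q:ℝ) * ξ ^ ((m:ℕ)+1))]
  set f : ℕ → (Fin n → Fin Q) := fun q m =>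
    ⟨(⌊Int.fract ((q:ℝ) * ξ ^ ((m:ℕ)+1)) * Q⌋).toNat, by
      have := hbox q m; omega⟩ with hfdef
  obtain ⟨q1, hq1, q2, hq2, hne, hfeq⟩ :=
    Finset.exists_ne_map_eq_of_card_lt_of_maps_to
      (s := Finset.range (Q ^ n + 1)) (t := (Finset.univ : Finset (Fin n → Fin Q)))
      (by simp) (fun a _ => Finset.mem_univ (f a))
  rw [Finset.mem_range] at hq1 hq2
  have hfract : ∀ k : Fin n,
      |Int.fract ((q1:ℝ) * ξ ^ ((k:ℕ)+1)) - Int.fract ((q2:ℝ) * ξ ^ ((k:ℕ)+1))| * Q < 1 := by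
    intro k
    have hfk := congrFun hfeq k
    simp only [hfdef, Fin.mk.injEq] at hfk
    have h1 := hbox q1 k
    have h2 := hbox q2 k
    have hfloor : ⌊Int.fract ((q1:ℝ) * ξ ^ ((k:ℕ)+1)) * Q⌋
        = ⌊Int.fract ((q2:ℝ) * ξ ^ ((k:ℕ)+1)) * Q⌋ := by omega
    have habs := Int.abs_sub_lt_one_of_floor_eq_floor hfloor
    calc |Int.fract ((q1:ℝ) * ξ ^ ((k:ℕ)+1)) - Int.fract ((q2:ℝ) * ξ ^ ((k:ℕ)+1))| * Q
        = |Int.fract ((q1:ℝ) * ξ ^ ((k:ℕ)+1)) * Q - Int.fract ((q2:ℝ) * ξ ^ ((k:ℕ)+1)) * Q| := by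
          rw [← sub_mul, abs_mul, abs_of_nonneg hQ0.le]
      _ < 1 := habs
  refine ⟨(Q:ℝ) ^ n, hQX.trans (le_self_pow₀ (by exact_mod_cast hQ1) (by omega)), ?_⟩
  have h0 : ((0 : Fin (n+1)) : ℕ) = 0 := rfl
  have hc1 : (q1:ℝ) ≤ (Q:ℝ) ^ n := by exact_mod_cast (by omega : q1 ≤ Q ^ n)
  have hc2 : (q2:ℝ) ≤ (Q:ℝ) ^ n := by exact_mod_cast (by omega : q2 ≤ Q ^ n)
  have hc1' : (0:ℝ) ≤ (q1:ℝ) := by positivity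
  have hc2' : (0:ℝ) ≤ (q2:ℝ) := by positivity
  refine ⟨fun m => ⌊(q1:ℝ) * ξ ^ (m:ℕ)⌋ - ⌊(q2:ℝ) * ξ ^ (m:ℕ)⌋, ?_, ?_, ?_⟩
  · simp only [h0, pow_zero, mul_one, Int.floor_natCast]
    intro h
    exact hne (by exact_mod_cast sub_eq_zero.mp h)
  · simp only [h0, pow_zero, mul_one, Int.floor_natCast]
    push_cast
    rw [abs_le]
    constructor <;> linarith
  · intro m hm
    have hmn : (m:ℕ) ≤ n := by omega
    have hfr := hfract ⟨(m:ℕ) - 1, by omega⟩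
    have hk1 : ((⟨(m:ℕ) - 1, by omega⟩ : Fin n) : ℕ) + 1 = (m:ℕ) := by
      simp only []
      omega
    rw [hk1] at hfr
    set u := (q1:ℝ) * ξ ^ (m:ℕ) with hu
    set v := (q2:ℝ) * ξ ^ (m:ℕ) with hv
    have hkey : Int.fract u - Int.fract v
        = ((q1:ℝ) - (q2:ℝ)) * ξ ^ (m:ℕ) - ((⌊u⌋:ℝ) - (⌊v⌋:ℝ)) := by
      rw [← Int.self_sub_floor, ← Int.self_sub_floor, hu, hv]
      ring
    simp only [h0, pow_zero, mul_one, Int.floor_natCast]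
    push_cast
    rw [← hkey]
    have hQn : ((Q:ℝ) ^ n) ^ (-(n:ℝ)⁻¹) = (Q:ℝ)⁻¹ := by
      rw [← Real.rpow_natCast (Q:ℝ) n, ← Real.rpow_mul hQ0.le]
      rw [mul_neg, mul_inv_cancel₀ (by positivity : (n:ℝ) ≠ 0)]
      exact Real.rpow_neg_one _
    rw [hQn, ← one_div, le_div_iff₀ hQ0]
    exact hfr.le

private lemma abs_pow_sub_pow_le'' (a b M : ℝ) (m : ℕ) (ha : |a| ≤ M) (hb : |b| ≤ M) :
    |a ^ m - b ^ m| ≤ m * M ^ (m - 1) * |a - b| := by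
  have hM : 0 ≤ M := (abs_nonneg a).trans ha
  rw [← geom_sum₂_mul a b m, abs_mul]
  gcongr
  calc |∑ i ∈ Finset.range m, a ^ i * b ^ (m - 1 - i)|
      ≤ ∑ i ∈ Finset.range m, |a ^ i * b ^ (m - 1 - i)| := Finset.abs_sum_le_sum_abs _ _
    _ ≤ ∑ _i ∈ Finset.range m, M ^ (m - 1) := by
        refine Finset.sum_le_sum fun i hi => ?_
        rw [abs_mul, abs_pow, abs_pow]
        calc |a| ^ i * |b| ^ (m - 1 - i) ≤ M ^ i * M ^ (m - 1 - i) := by gcongr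
          _ = M ^ (m - 1) := by
              rw [← pow_add]
              congr 1
              have := Finset.mem_range.mp hi
              omega
    _ = m * M ^ (m - 1) := by simp [mul_comm]

private lemma solv_of_inf (n : ℕ) (hn : 1 ≤ n) (ξ : ℝ) (r s' : ℝ) (hs0 : 0 < s')
    (hs : s' < (r - n + 1) / n)
    (hinf : {pq : ℤ × ℤ | 0 < |(pq.2 : ℝ) * ξ - pq.1| ∧
      |(pq.2 : ℝ) * ξ - pq.1| ≤ (max (|pq.1| : ℝ) (|pq.2| : ℝ)) ^ (-r)}.Infinite)
    (X₀ : ℝ) : ∃ X : ℝ, X₀ ≤ X ∧ LamSol n ξ X s' := by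
  have hn0 : (0:ℝ) < n := by exact_mod_cast hn
  have hn1 : (1:ℝ) ≤ n := by exact_mod_cast hn
  have hns : n * s' < r - n + 1 := by
    rw [lt_div_iff₀ hn0] at hs; nlinarith
  set ε : ℝ := r - (n - 1) - n * s' with hεdef
  have hε : 0 < ε := by simp only [hεdef]; linarith
  have hns0 : 0 < (n:ℝ) * s' := mul_pos hn0 hs0
  have hr1 : (n:ℝ) - 1 < r := by linarith
  have hr0 : 0 < r := by linarith
  set K : ℝ := n * 2 ^ (n - 1) with hKdef
  have h2p : (1:ℝ) ≤ 2 ^ (n-1) := one_le_pow₀ (by norm_num)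
  have hK1 : 1 ≤ K := by nlinarith
  set B : ℝ := max (max 1 X₀) (K ^ (1/ε)) with hBdef
  have hB1 : 1 ≤ B := le_trans (le_max_left 1 X₀) (le_max_left _ _)
  have hBX : X₀ ≤ B := le_trans (le_max_right 1 X₀) (le_max_left _ _)
  have hBK : K ^ (1/ε) ≤ B := le_max_right _ _
  -- pick a solution with |q| > B
  set T : Set (ℤ × ℤ) := {pq | (|pq.1| : ℝ) ≤ B * |ξ| + 1 ∧ (|pq.2| : ℝ) ≤ B} with hTdef
  have hTfin : T.Finite := by
    apply Set.Finite.subset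
      (((Set.finite_Icc (-⌈B * |ξ| + 1⌉) ⌈B * |ξ| + 1⌉)).prod
        ((Set.finite_Icc (-⌈B⌉) ⌈B⌉)))
    rintro ⟨p, q⟩ ⟨h1, h2⟩
    have e1 : |(p:ℝ)| ≤ ((⌈B * |ξ| + 1⌉ : ℤ) : ℝ) := h1.trans (Int.le_ceil _)
    have e2 : |(q:ℝ)| ≤ ((⌈B⌉ : ℤ) : ℝ) := h2.trans (Int.le_ceil _)
    rw [← Int.cast_abs] at e1 e2
    have e1' := abs_le.mp (show |p| ≤ ⌈B * |ξ| + 1⌉ by exact_mod_cast e1)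
    have e2' := abs_le.mp (show |q| ≤ ⌈B⌉ by exact_mod_cast e2)
    exact ⟨Set.mem_Icc.mpr e1', Set.mem_Icc.mpr e2'⟩
  obtain ⟨⟨p, q⟩, ⟨⟨hpos, hle⟩, hnT⟩⟩ := (hinf.diff hTfin).nonempty
  simp only [hTdef, Set.mem_setOf_eq, not_and_or, not_le] at hnT
  set H : ℝ := max (|p| : ℝ) (|q| : ℝ) with hHdef
  have hpos' : 0 < |(q:ℝ) * ξ - (p:ℝ)| := hpos
  have hle' : |(q:ℝ) * ξ - (p:ℝ)| ≤ H ^ (-r) := hle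
  have hH1 : 1 ≤ H := by
    by_contra hcon
    push_neg at hcon
    have hp0 : |(p:ℝ)| < 1 := lt_of_le_of_lt (le_max_left _ _) hcon
    have hq0 : |(q:ℝ)| < 1 := lt_of_le_of_lt (le_max_right _ _) hcon
    rw [← Int.cast_abs] at hp0 hq0
    have hp1 : p = 0 := Int.abs_lt_one_iff.mp (by exact_mod_cast hp0)
    have hq1 : q = 0 := Int.abs_lt_one_iff.mp (by exact_mod_cast hq0)
    rw [hp1, hq1] at hpos'
    norm_num at hpos'
  have hH0 : (0:ℝ) < H := lt_of_lt_of_le one_pos hH1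
  have hHr1 : H ^ (-r) ≤ 1 := Real.rpow_le_one_of_one_le_of_nonpos hH1 (by linarith)
  have h2 : |(q:ℝ) * ξ - (p:ℝ)| ≤ 1 := hle'.trans hHr1
  have hpbound : |(p:ℝ)| ≤ |(q:ℝ)| * |ξ| + 1 := by
    have h3 := abs_sub_abs_le_abs_sub (p:ℝ) ((q:ℝ) * ξ)
    rw [abs_sub_comm ((p:ℝ)) ((q:ℝ) * ξ), abs_mul] at h3
    linarith
  have hqB : B < |(q:ℝ)| := by
    rcases hnT with h | h
    · by_contra hcon
      push_neg at hcon
      have : |(p:ℝ)| ≤ B * |ξ| + 1 := by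
        calc |(p:ℝ)| ≤ |(q:ℝ)| * |ξ| + 1 := hpbound
          _ ≤ B * |ξ| + 1 := by gcongr <;> try exact abs_nonneg ξ
      linarith
    · exact h
  have hY1 : 1 < |(q:ℝ)| := lt_of_le_of_lt hB1 hqB
  have hY0 : (0:ℝ) < |(q:ℝ)| := by linarith
  have hq0 : q ≠ 0 := by
    intro h
    rw [h] at hY1
    norm_num at hY1
  have hYH : |(q:ℝ)| ≤ H := le_max_right _ _
  have hpH : |(p:ℝ)| ≤ H := le_max_left _ _
  have hM : |(q:ℝ) * ξ| ≤ 2 * H := by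
    have h4 := abs_add_le ((q:ℝ) * ξ - p) (p:ℝ)
    simp only [sub_add_cancel] at h4
    linarith
  have hpM : |(p:ℝ)| ≤ 2 * H := by linarith
  refine ⟨|(q:ℝ)| ^ n, ?_, ?_⟩
  · calc X₀ ≤ B := hBX
      _ ≤ |(q:ℝ)| := hqB.le
      _ ≤ |(q:ℝ)| ^ n := le_self_pow₀ hY1.le (by omega)
  refine ⟨fun m => q ^ (n - (m:ℕ)) * p ^ (m:ℕ), ?_, ?_, ?_⟩
  · have h0 : ((0 : Fin (n+1)) : ℕ) = 0 := rfl
    simp only [h0, Nat.sub_zero, pow_zero, mul_one]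
    exact pow_ne_zero n hq0
  · have h0 : ((0 : Fin (n+1)) : ℕ) = 0 := rfl
    simp only [h0, Nat.sub_zero, pow_zero, mul_one]
    push_cast
    rw [abs_pow]
  · intro m hm
    have hmn : (m:ℕ) ≤ n := by omega
    have h0 : ((0 : Fin (n+1)) : ℕ) = 0 := rfl
    simp only [h0, Nat.sub_zero, pow_zero, mul_one]
    have hsplit : ((q:ℝ)) ^ n = (q:ℝ) ^ (n - (m:ℕ)) * (q:ℝ) ^ (m:ℕ) := by
      rw [← pow_add]
      congr 1
      omega
    have hid : ((q ^ n : ℤ) : ℝ) * ξ ^ (m:ℕ) - ((q ^ (n - (m:ℕ)) * p ^ (m:ℕ) : ℤ) : ℝ)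
        = (q:ℝ) ^ (n - (m:ℕ)) * (((q:ℝ) * ξ) ^ (m:ℕ) - (p:ℝ) ^ (m:ℕ)) := by
      push_cast
      rw [hsplit, mul_pow]
      ring
    push_cast
    push_cast at hid
    rw [hid, abs_mul, abs_pow]
    have hbound := abs_pow_sub_pow_le'' ((q:ℝ) * ξ) (p:ℝ) (2 * H) (m:ℕ) hM hpM
    have hmcast : ((m:ℕ) : ℝ) ≤ (n : ℝ) := by exact_mod_cast hmn
    calc |(q:ℝ)| ^ (n - (m:ℕ)) * |((q:ℝ) * ξ) ^ (m:ℕ) - (p:ℝ) ^ (m:ℕ)|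
        ≤ |(q:ℝ)| ^ (n - (m:ℕ)) * (((m:ℕ):ℝ) * (2 * H) ^ ((m:ℕ) - 1) * |(q:ℝ) * ξ - (p:ℝ)|) := by
          gcongr <;> try exact hbound
      _ ≤ (2 * H) ^ (n - (m:ℕ)) * ((n:ℝ) * (2 * H) ^ ((m:ℕ) - 1) * H ^ (-r)) := by
          have hY2H : |(q:ℝ)| ≤ 2 * H := by linarith
          gcongr <;> first
            | positivity
            | linarith
            | exact hle'
            | exact hmcast
      _ = (n:ℝ) * (2 * H) ^ (n - 1) * H ^ (-r) := by
          rw [show (2*H) ^ (n - (m:ℕ)) * ((n:ℝ) * (2*H) ^ ((m:ℕ)-1) * H ^ (-r))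
            = (n:ℝ) * ((2*H) ^ (n - (m:ℕ)) * (2*H) ^ ((m:ℕ)-1)) * H ^ (-r) by ring,
            ← pow_add]
          congr 3
          omega
      _ = K * (H ^ ((n:ℝ) - 1) * H ^ (-r)) := by
          rw [mul_pow, hKdef]
          rw [← Real.rpow_natCast H (n-1)]
          rw [show ((n - 1 : ℕ) : ℝ) = (n:ℝ) - 1 by
            rw [Nat.cast_sub hn]; norm_num]
          ring
      _ = K * H ^ ((n:ℝ) - 1 - r) := by
          have he : (n:ℝ) - 1 + -r = (n:ℝ) - 1 - r := by ring
          rw [← Real.rpow_add hH0, he]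
      _ ≤ K * |(q:ℝ)| ^ ((n:ℝ) - 1 - r) := by
          have hneg : (n:ℝ) - 1 - r < 0 := by linarith
          exact mul_le_mul_of_nonneg_left
            ((Real.rpow_le_rpow_iff_of_neg hH0 hY0 hneg).mpr hYH) (by linarith)
      _ = K * |(q:ℝ)| ^ (-ε) * |(q:ℝ)| ^ (-((n:ℝ) * s')) := by
          have hexp : (n:ℝ) - 1 - r = -ε + -((n:ℝ) * s') := by
            simp only [hεdef]; ring
          rw [hexp, Real.rpow_add hY0]
          ring
      _ ≤ 1 * |(q:ℝ)| ^ (-((n:ℝ) * s')) := by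
          have hK0 : (0:ℝ) ≤ K := by linarith
          have hKY : K ≤ |(q:ℝ)| ^ ε := by
            calc K = K ^ ((1/ε) * ε) := by
                  rw [one_div, inv_mul_cancel₀ hε.ne', Real.rpow_one]
              _ = (K ^ (1/ε)) ^ ε := Real.rpow_mul hK0 _ _
              _ ≤ |(q:ℝ)| ^ ε := Real.rpow_le_rpow (Real.rpow_nonneg hK0 _)
                    (hBK.trans hqB.le) hε.le
          have hmain : K * |(q:ℝ)| ^ (-ε) ≤ 1 := by
            calc K * |(q:ℝ)| ^ (-ε) ≤ |(q:ℝ)| ^ ε * |(q:ℝ)| ^ (-ε) :=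
                  mul_le_mul_of_nonneg_right hKY (Real.rpow_nonneg hY0.le _)
              _ = 1 := by rw [← Real.rpow_add hY0]; simp
          exact mul_le_mul_of_nonneg_right hmain (Real.rpow_nonneg hY0.le _)
      _ = (|(q:ℝ)| ^ n) ^ (-s') := by
          rw [one_mul, ← Real.rpow_natCast (|(q:ℝ)|) n, ← Real.rpow_mul hY0.le]
          congr 1
          ring

/-- For any `n ≥ 1` and any irrational real `ξ`, `λₙ(ξ) ≥ (w₁(ξ) - n + 1)/n`. -/
theorem lamExp_ge (n : ℕ) (hn : 1 ≤ n) (ξ : ℝ) (hξ : Irrational ξ) :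
    lamExp n ξ ≥ (wOneExp ξ - (n : ℝ≥0∞) + 1) / (n : ℝ≥0∞) := by
  have hn0 : (n : ℝ≥0∞) ≠ 0 := by exact_mod_cast Nat.pos_of_ne_zero (by omega) |>.ne'
  have hnt : (n : ℝ≥0∞) ≠ ∞ := ENNReal.natCast_ne_top n
  have hnR : (0:ℝ) < n := by exact_mod_cast hn
  have hdir : ENNReal.ofReal ((n:ℝ)⁻¹) ≤ lamExp n ξ :=
    le_sSup ⟨(n:ℝ)⁻¹, rfl, dirichlet_sim n hn ξ⟩
  refine le_of_forall_lt_imp_le_of_dense fun c hc => ?_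
  by_cases hc1 : c ≤ (n : ℝ≥0∞)⁻¹
  · refine le_trans hc1 (le_trans (le_of_eq ?_) hdir)
    rw [← ENNReal.ofReal_natCast n, ← ENNReal.ofReal_inv_of_pos hnR]
  push_neg at hc1
  have hcfin : c ≠ ∞ := hc.ne_top
  set d : ℝ≥0∞ := c * n with hddef
  have hd1 : 1 < d := by
    have := (ENNReal.mul_lt_mul_iff_left hn0 hnt).mpr hc1
    rwa [ENNReal.inv_mul_cancel hn0 hnt] at this
  have hdfin : d ≠ ∞ := ENNReal.mul_ne_top hcfin hnt
  have hd : d < wOneExp ξ - n + 1 :=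
    (ENNReal.lt_div_iff_mul_lt (Or.inl hn0) (Or.inl hnt)).mp hc
  have hWn : (n : ℝ≥0∞) < wOneExp ξ := by
    have h1 : (1 : ℝ≥0∞) < wOneExp ξ - n + 1 := lt_trans hd1 hd
    have h2 : (0 : ℝ≥0∞) < wOneExp ξ - n := by
      by_contra hcon
      push_neg at hcon
      have : wOneExp ξ - n = 0 := le_antisymm hcon zero_le
      rw [this, zero_add] at h1
      exact lt_irrefl _ h1
    exact tsub_pos_iff_lt.mp h2
  have hstep : d - 1 + n < wOneExp ξ := by
    have h2 : d - 1 < wOneExp ξ - n := by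
      rw [ENNReal.sub_lt_iff_lt_right ENNReal.one_ne_top hd1.le]
      exact hd
    calc d - 1 + n < (wOneExp ξ - n) + n :=
          (ENNReal.add_lt_add_iff_right hnt).mpr h2
      _ = wOneExp ξ := tsub_add_cancel_of_le hWn.le
  rw [wOneExp] at hstep
  obtain ⟨w, hw, hvw⟩ := lt_sSup_iff.mp hstep
  obtain ⟨r, rfl, hinf⟩ := hw
  have hnr : (n : ℝ) < r := by
    have h3 : (n : ℝ≥0∞) < ENNReal.ofReal r :=
      lt_of_le_of_lt le_add_self hvw
    rw [← ENNReal.ofReal_natCast n] at h3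
    by_contra hcon
    push_neg at hcon
    exact absurd (ENNReal.ofReal_le_ofReal hcon) (not_le.mpr h3)
  have hd2 : d < ENNReal.ofReal r - n + 1 := by
    have h4 : d - 1 < ENNReal.ofReal r - n := lt_tsub_iff_right.mpr hvw
    calc d = d - 1 + 1 := (tsub_add_cancel_of_le hd1.le).symm
      _ < (ENNReal.ofReal r - n) + 1 :=
          (ENNReal.add_lt_add_iff_right ENNReal.one_ne_top).mpr h4
  have hcomp : (ENNReal.ofReal r - n + 1) / n = ENNReal.ofReal ((r - n + 1) / n) := by
    rw [← ENNReal.ofReal_natCast n, ← ENNReal.ofReal_sub r (by positivity),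
      ← ENNReal.ofReal_one, ← ENNReal.ofReal_add (by linarith) (by norm_num),
      ← ENNReal.ofReal_div_of_pos hnR]
  have hclt : c < ENNReal.ofReal ((r - n + 1) / n) := by
    rw [← hcomp]
    have h5 : d / n < (ENNReal.ofReal r - n + 1) / n := by
      rw [div_eq_mul_inv, div_eq_mul_inv]
      exact (ENNReal.mul_lt_mul_iff_left (ENNReal.inv_ne_zero.mpr hnt)
        (ENNReal.inv_ne_top.mpr hn0)).mpr hd2
    have h6 : d / n = c := by
      rw [hddef, mul_div_assoc, ENNReal.div_self hn0 hnt, mul_one]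
    rwa [h6] at h5
  set t : ℝ := (r - n + 1) / n with htdef
  have hct : c.toReal < t := by
    rw [← ENNReal.lt_ofReal_iff_toReal_lt hcfin]
    exact hclt
  have ht0 : 0 < t := lt_of_le_of_lt ENNReal.toReal_nonneg hct
  set s' : ℝ := (c.toReal + t) / 2 with hs'def
  have hs'0 : 0 < s' := by
    have := ENNReal.toReal_nonneg (a := c)
    simp only [hs'def]
    linarith
  have hs't : s' < t := by simp only [hs'def]; linarith
  have hcs' : c.toReal < s' := by simp only [hs'def]; linarith
  calc c = ENNReal.ofReal c.toReal := (ENNReal.ofReal_toReal hcfin).symm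
    _ ≤ ENNReal.ofReal s' := ENNReal.ofReal_le_ofReal hcs'.le
    _ ≤ lamExp n ξ := le_sSup ⟨s', rfl, solv_of_inf n hn ξ r s' hs'0 hs't hinf⟩
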